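/- arXiv:2403.01079 — 2 statements merged into one kernel-verified Lean document; each statement's English description precedes it below -/
import Mathlib

section
/- (Spectral lower bound for Ncut) For every partition A₁,…,A_k of {1,…,n} into nonempty sets, Ncut(A₁,…,A_k) ≥ λ₁ + λ₂ + … + λ_k, where λ₁ ≤ … ≤ λ_n are the eigenvalues of the normalized graph Laplacian L_sym listed with multiplicity. -/
open Matrix BigOperators Finset

lemma myParseval {n : ℕ} (u : Fin n → (Fin n → ℝ))
    (horth : ∀ i j, u i ⬝ᵥ u j = if i = j then (1 : ℝ) else 0)
    (x y : Fin n → ℝ) :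
    ∑ i, (u i ⬝ᵥ x) * (u i ⬝ᵥ y) = x ⬝ᵥ y := by
  set U : Matrix (Fin n) (Fin n) ℝ := Matrix.of u with hU
  have hUUT : U * Uᵀ = 1 := by
    ext i j
    simpa [hU, Matrix.of_apply, Matrix.mul_apply, Matrix.one_apply, dotProduct] using horth i j
  have hUTU : Uᵀ * U = 1 := mul_eq_one_comm.mp hUUT
  have hcol : ∀ a b, ∑ i, u i a * u i b = if a = b then (1:ℝ) else 0 := by
    intro a b
    have := congrFun (congrFun hUTU a) b
    simpa [hU, Matrix.of_apply, Matrix.mul_apply, Matrix.one_apply] using this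
  calc ∑ i, (u i ⬝ᵥ x) * (u i ⬝ᵥ y)
      = ∑ i, ∑ a, ∑ b, (u i a * u i b) * (x a * y b) := by
        refine Finset.sum_congr rfl fun i _ => ?_
        simp only [dotProduct, Finset.sum_mul_sum]
        refine Finset.sum_congr rfl fun a _ => Finset.sum_congr rfl fun b _ => by ring
    _ = ∑ a, ∑ b, (∑ i, u i a * u i b) * (x a * y b) := by
        rw [Finset.sum_comm]
        refine Finset.sum_congr rfl fun a _ => ?_
        rw [Finset.sum_comm]
        simp [Finset.sum_mul]
    _ = x ⬝ᵥ y := by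
        simp only [hcol]
        simp [dotProduct, ite_mul]

lemma myQuadForm {n : ℕ} (L : Matrix (Fin n) (Fin n) ℝ) (hLs : Lᵀ = L)
    (μ : Fin n → ℝ) (u : Fin n → (Fin n → ℝ))
    (horth : ∀ i j, u i ⬝ᵥ u j = if i = j then (1 : ℝ) else 0)
    (heig : ∀ i, L *ᵥ u i = μ i • u i) (x : Fin n → ℝ) :
    x ⬝ᵥ (L *ᵥ x) = ∑ i, μ i * (u i ⬝ᵥ x)^2 := by
  have key : ∀ i, u i ⬝ᵥ (L *ᵥ x) = μ i * (u i ⬝ᵥ x) := by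
    intro i
    rw [Matrix.dotProduct_mulVec, ← hLs, Matrix.vecMul_transpose, heig i,
      smul_dotProduct]
    simp
  calc x ⬝ᵥ (L *ᵥ x) = ∑ i, (u i ⬝ᵥ x) * (u i ⬝ᵥ (L *ᵥ x)) :=
        (myParseval u horth x (L *ᵥ x)).symm
    _ = ∑ i, μ i * (u i ⬝ᵥ x)^2 := by
        refine Finset.sum_congr rfl fun i _ => ?_
        rw [key i]; ring

lemma sumDot {n k : ℕ} (f : Fin k → Fin n → ℝ) (y : Fin n → ℝ) :
    (∑ j, f j) ⬝ᵥ y = ∑ j, f j ⬝ᵥ y := by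
  simp only [dotProduct, Finset.sum_apply, Finset.sum_mul]
  exact Finset.sum_comm

lemma dotSum {n k : ℕ} (f : Fin k → Fin n → ℝ) (y : Fin n → ℝ) :
    y ⬝ᵥ (∑ j, f j) = ∑ j, y ⬝ᵥ f j := by
  simp only [dotProduct, Finset.sum_apply, Finset.mul_sum]
  exact Finset.sum_comm

lemma myBessel {n k : ℕ} (h : Fin k → (Fin n → ℝ))
    (horth : ∀ j j', h j ⬝ᵥ h j' = if j = j' then (1 : ℝ) else 0)
    (x : Fin n → ℝ) (hx : x ⬝ᵥ x = 1) :
    ∑ j, (h j ⬝ᵥ x)^2 ≤ 1 := by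
  set v : Fin n → ℝ := x - ∑ j, (h j ⬝ᵥ x) • h j with hv
  have hvv : 0 ≤ v ⬝ᵥ v := Finset.sum_nonneg fun i _ => mul_self_nonneg _
  have hexp : v ⬝ᵥ v = 1 - ∑ j, (h j ⬝ᵥ x)^2 := by
    rw [hv, sub_dotProduct, dotProduct_sub, dotProduct_sub,
      sumDot, sumDot, dotSum]
    simp only [smul_dotProduct, dotProduct_smul, smul_eq_mul, dotSum,
      dotProduct_smul, horth, smul_eq_mul, mul_ite, mul_one, mul_zero,
      Finset.sum_ite_eq', Finset.sum_ite_eq, Finset.mem_univ, if_true]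
    have hsymm : ∀ j, x ⬝ᵥ h j = h j ⬝ᵥ x := fun j => dotProduct_comm _ _
    simp only [hsymm, hx]
    have : ∀ j : Fin k, (h j ⬝ᵥ x) * (h j ⬝ᵥ x) = (h j ⬝ᵥ x)^2 := fun j => (sq _).symm
    rw [Finset.sum_congr rfl fun j _ => this j]
    ring
  linarith [hexp ▸ hvv]

lemma myRearr {n k : ℕ} (hkn : k ≤ n) (μ : Fin n → ℝ) (hmono : Monotone μ)
    (t : Fin n → ℝ) (ht0 : ∀ i, 0 ≤ t i) (ht1 : ∀ i, t i ≤ 1)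
    (htsum : ∑ i, t i = k) :
    ∑ i : Fin k, μ (Fin.castLE hkn i) ≤ ∑ i, μ i * t i := by
  rcases Nat.eq_zero_or_pos k with hk | hk
  · subst hk
    simp only [Finset.univ_eq_empty, Finset.sum_empty]
    have hz : ∀ i ∈ Finset.univ, t i = 0 := by
      refine (Finset.sum_eq_zero_iff_of_nonneg (fun i _ => ht0 i)).mp ?_
      rw [htsum]; norm_num
    rw [Finset.sum_congr rfl fun i hi => by rw [hz i hi, mul_zero]]
    simp
  · have hk1n : k - 1 < n := by omega
    set c : ℝ := μ ⟨k - 1, hk1n⟩ with hc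
    set S : Finset (Fin n) := Finset.univ.map ⟨Fin.castLE hkn, Fin.castLE_injective hkn⟩ with hS
    have hmemS : ∀ i : Fin n, i ∈ S ↔ (i : ℕ) < k := by
      intro i
      simp only [hS, Finset.mem_map, Finset.mem_univ, true_and, Function.Embedding.coeFn_mk]
      constructor
      · rintro ⟨a, rfl⟩; exact a.isLt
      · intro hi; exact ⟨⟨i, hi⟩, by ext; simp⟩
    have hcard : S.card = k := by simp [hS]
    have hsum1 : ∑ i : Fin k, μ (Fin.castLE hkn i) = ∑ i ∈ S, μ i := by
      rw [hS, Finset.sum_map]; rfl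
    rw [hsum1]
    have key : ∑ i ∈ S, (μ i - c) ≤ ∑ i, (μ i - c) * t i := by
      rw [← Finset.sum_add_sum_compl S (fun i => (μ i - c) * t i)]
      have h1 : ∑ i ∈ S, (μ i - c) ≤ ∑ i ∈ S, (μ i - c) * t i := by
        refine Finset.sum_le_sum fun i hi => ?_
        have hik : (i : ℕ) < k := (hmemS i).mp hi
        have hle : i ≤ (⟨k - 1, hk1n⟩ : Fin n) := by rw [Fin.le_def]; simp; omega
        have hμ : μ i - c ≤ 0 := by have := hmono hle; rw [hc]; linarith
        nlinarith [ht1 i, ht0 i]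
      have h2 : 0 ≤ ∑ i ∈ Sᶜ, (μ i - c) * t i := by
        refine Finset.sum_nonneg fun i hi => ?_
        have hik : ¬ (i : ℕ) < k := fun h => (Finset.mem_compl.mp hi) ((hmemS i).mpr h)
        have hle : (⟨k - 1, hk1n⟩ : Fin n) ≤ i := by rw [Fin.le_def]; simp; omega
        have hμ : 0 ≤ μ i - c := by have := hmono hle; rw [hc]; linarith
        exact mul_nonneg hμ (ht0 i)
      linarith
    have hck : ∑ i, c * t i = c * k := by rw [← Finset.mul_sum, htsum]
    have e1 : ∑ i ∈ S, μ i = ∑ i ∈ S, (μ i - c) + c * k := by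
      rw [Finset.sum_sub_distrib]
      simp [hcard]
      ring
    have e2 : ∑ i, μ i * t i = ∑ i, (μ i - c) * t i + ∑ i, c * t i := by
      rw [← Finset.sum_add_distrib]
      exact Finset.sum_congr rfl fun i _ => by ring
    rw [e1, e2, hck]
    linarith

lemma cutQuad (n k : ℕ) (W : Matrix (Fin n) (Fin n) ℝ)
    (d : Fin n → ℝ) (hd : ∀ i, d i = ∑ j, W i j) (hdpos : ∀ i, 0 < d i)
    (Lsym : Matrix (Fin n) (Fin n) ℝ)
    (hLdef : Lsym = 1 -
      Matrix.diagonal (fun i => (Real.sqrt (d i))⁻¹) * W *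
        Matrix.diagonal (fun i => (Real.sqrt (d i))⁻¹))
    (A : Fin k → Finset (Fin n)) (hne : ∀ j, (A j).Nonempty) (j : Fin k) :
    (fun (i : Fin n) => if i ∈ A j then Real.sqrt (d i) / Real.sqrt (∑ i ∈ A j, d i) else 0) ⬝ᵥ
      (Lsym *ᵥ (fun i => if i ∈ A j then Real.sqrt (d i) / Real.sqrt (∑ i ∈ A j, d i) else 0)) =
      (∑ i ∈ A j, ∑ l ∈ (A j)ᶜ, W i l) / (∑ i ∈ A j, d i) := by
  have hvolpos : 0 < ∑ i ∈ A j, d i := Finset.sum_pos (fun i _ => hdpos i) (hne j)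
  set v : ℝ := ∑ i ∈ A j, d i with hv
  set h : Fin n → ℝ := fun i => if i ∈ A j then Real.sqrt (d i) / Real.sqrt v else 0 with hh
  set M : Matrix (Fin n) (Fin n) ℝ :=
    Matrix.diagonal (fun i => (Real.sqrt (d i))⁻¹) * W *
      Matrix.diagonal (fun i => (Real.sqrt (d i))⁻¹) with hM
  have hhh : h ⬝ᵥ h = 1 := by
    simp only [hh, dotProduct]
    have key : ∀ i, (if i ∈ A j then Real.sqrt (d i) / Real.sqrt v else 0) *
        (if i ∈ A j then Real.sqrt (d i) / Real.sqrt v else 0) =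
        if i ∈ A j then d i / v else 0 := by
      intro i
      by_cases hi : i ∈ A j
      · simp only [if_pos hi]
        rw [div_mul_div_comm, Real.mul_self_sqrt (hdpos i).le, Real.mul_self_sqrt hvolpos.le]
      · simp [hi]
    rw [Finset.sum_congr rfl fun i _ => key i, Finset.sum_ite_mem, Finset.univ_inter,
      ← Finset.sum_div]
    exact div_self hvolpos.ne'
  have hQ : h ⬝ᵥ (M *ᵥ h) = (∑ i ∈ A j, ∑ l ∈ A j, W i l) / v := by
    have hMapp : ∀ i l, M i l = (Real.sqrt (d i))⁻¹ * W i l * (Real.sqrt (d l))⁻¹ := by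
      intro i l
      simp [hM, Matrix.mul_apply, Matrix.diagonal, Finset.sum_ite_eq, Finset.sum_ite_eq',
        Matrix.mul_diagonal, Matrix.diagonal_mul]
    have expand : h ⬝ᵥ (M *ᵥ h) = ∑ i, ∑ l, h i * (M i l * h l) := by
      simp only [dotProduct, Matrix.mulVec, dotProduct, Finset.mul_sum]
    rw [expand]
    have term : ∀ i l, h i * (M i l * h l) =
        if i ∈ A j then (if l ∈ A j then W i l / v else 0) else 0 := by
      intro i l
      by_cases hi : i ∈ A j
      · by_cases hl : l ∈ A j
        · simp only [hh, if_pos hi, if_pos hl, hMapp]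
          have h1 : Real.sqrt (d i) ≠ 0 := Real.sqrt_ne_zero'.mpr (hdpos i)
          have h2 : Real.sqrt (d l) ≠ 0 := Real.sqrt_ne_zero'.mpr (hdpos l)
          have h3 : Real.sqrt v ≠ 0 := Real.sqrt_ne_zero'.mpr hvolpos
          have h4 : Real.sqrt v * Real.sqrt v = v := Real.mul_self_sqrt hvolpos.le
          field_simp
          linear_combination (-(W i l)) * h4
        · simp [hh, hl]
      · simp [hh, hi]
    rw [Finset.sum_congr rfl fun i _ => Finset.sum_congr rfl fun l _ => term i l]
    simp only [Finset.sum_ite_mem, Finset.univ_inter, Finset.sum_ite_irrel, Finset.sum_const_zero]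
    simp [Finset.sum_div]
  have hmv : Lsym *ᵥ h = h - M *ᵥ h := by
    rw [hLdef, Matrix.sub_mulVec, Matrix.one_mulVec]
  rw [hmv, dotProduct_sub, hhh, hQ]
  have hvol : v = (∑ i ∈ A j, ∑ l ∈ A j, W i l) + ∑ i ∈ A j, ∑ l ∈ (A j)ᶜ, W i l := by
    rw [hv, ← Finset.sum_add_distrib]
    refine Finset.sum_congr rfl fun i _ => ?_
    rw [hd i, ← Finset.sum_add_sum_compl (A j) (fun l => W i l)]
  rw [eq_div_iff hvolpos.ne', sub_mul, one_mul, div_mul_cancel₀ _ hvolpos.ne']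
  linarith [hvol]

/-- **Spectral lower bound for Ncut.**
For every partition `A 0, …, A (k-1)` of `{1,…,n}` into nonempty sets,
`Ncut (A 0, …, A (k-1)) = ∑ j, cut (A j) / vol (A j) ≥ μ 0 + ⋯ + μ (k-1)`, where
`μ 0 ≤ … ≤ μ (n-1)` are the eigenvalues of the normalized graph Laplacian `L_sym`
listed with multiplicity (witnessed by an orthonormal eigenbasis `u`). -/
theorem ncut_spectral_lower_bound
    (n k : ℕ) (hkn : k ≤ n) (W : Matrix (Fin n) (Fin n) ℝ)
    (hWsymm : W.IsSymm) (hWnn : ∀ i j, 0 ≤ W i j)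
    (d : Fin n → ℝ) (hd : ∀ i, d i = ∑ j, W i j) (hdpos : ∀ i, 0 < d i)
    (Lsym : Matrix (Fin n) (Fin n) ℝ)
    (hLdef : Lsym = 1 -
      Matrix.diagonal (fun i => (Real.sqrt (d i))⁻¹) * W *
        Matrix.diagonal (fun i => (Real.sqrt (d i))⁻¹))
    (μ : Fin n → ℝ) (hmono : Monotone μ)
    (u : Fin n → (Fin n → ℝ))
    (horth : ∀ i j, u i ⬝ᵥ u j = if i = j then (1 : ℝ) else 0)
    (heig : ∀ i, Lsym *ᵥ u i = μ i • u i)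
    (A : Fin k → Finset (Fin n))
    (hne : ∀ j, (A j).Nonempty)
    (hdisj : ∀ j j', j ≠ j' → Disjoint (A j) (A j'))
    (hcover : ∀ i : Fin n, ∃ j, i ∈ A j) :
    ∑ i : Fin k, μ (Fin.castLE hkn i) ≤
      ∑ j : Fin k, (∑ i ∈ A j, ∑ l ∈ (A j)ᶜ, W i l) / (∑ i ∈ A j, d i) := by
  have hvolpos : ∀ j, 0 < ∑ i ∈ A j, d i := fun j =>
    Finset.sum_pos (fun i _ => hdpos i) (hne j)
  set h : Fin k → (Fin n → ℝ) := fun j i =>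
    if i ∈ A j then Real.sqrt (d i) / Real.sqrt (∑ i ∈ A j, d i) else 0 with hh
  -- Lsym is symmetric
  have hLs : Lsymᵀ = Lsym := by
    rw [hLdef, Matrix.transpose_sub, Matrix.transpose_one, Matrix.transpose_mul,
      Matrix.transpose_mul, Matrix.diagonal_transpose, hWsymm.eq, Matrix.mul_assoc]
  -- h is an orthonormal family
  have horthh : ∀ j j', h j ⬝ᵥ h j' = if j = j' then (1:ℝ) else 0 := by
    intro j j'
    by_cases hjj : j = j'
    · subst hjj
      simp only [hh, dotProduct, if_pos rfl]
      have key : ∀ i, (if i ∈ A j then Real.sqrt (d i) / Real.sqrt (∑ i ∈ A j, d i) else 0) *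
          (if i ∈ A j then Real.sqrt (d i) / Real.sqrt (∑ i ∈ A j, d i) else 0) =
          if i ∈ A j then d i / (∑ i ∈ A j, d i) else 0 := by
        intro i
        by_cases hi : i ∈ A j
        · simp only [if_pos hi]
          rw [div_mul_div_comm, Real.mul_self_sqrt (hdpos i).le,
            Real.mul_self_sqrt (hvolpos j).le]
        · simp [hi]
      rw [Finset.sum_congr rfl fun i _ => key i, Finset.sum_ite_mem, Finset.univ_inter,
        ← Finset.sum_div]
      exact div_self (hvolpos j).ne'
    · simp only [hh, dotProduct, if_neg hjj]
      refine Finset.sum_eq_zero fun i _ => ?_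
      by_cases hi : i ∈ A j
      · have hi' : i ∉ A j' := fun h' => Finset.disjoint_left.mp (hdisj j j' hjj) hi h'
        simp [hi, hi']
      · simp [hi]
  -- Rayleigh quotient of each h j is cut/vol
  have hQ : ∀ j, h j ⬝ᵥ (Lsym *ᵥ h j) =
      (∑ i ∈ A j, ∑ l ∈ (A j)ᶜ, W i l) / (∑ i ∈ A j, d i) := fun j =>
    cutQuad n k W d hd hdpos Lsym hLdef A hne j
  -- coefficients
  set t : Fin n → ℝ := fun i => ∑ j, (u i ⬝ᵥ h j)^2 with ht
  have ht0 : ∀ i, 0 ≤ t i := fun i => Finset.sum_nonneg fun j _ => sq_nonneg _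
  have ht1 : ∀ i, t i ≤ 1 := by
    intro i
    have hb := myBessel h horthh (u i) (by simpa using horth i i)
    rw [ht]
    calc ∑ j, (u i ⬝ᵥ h j)^2 = ∑ j, (h j ⬝ᵥ u i)^2 :=
          Finset.sum_congr rfl fun j _ => by rw [dotProduct_comm]
      _ ≤ 1 := hb
  have htsum : ∑ i, t i = k := by
    rw [ht]
    rw [Finset.sum_comm]
    have : ∀ j, ∑ i, (u i ⬝ᵥ h j)^2 = (1:ℝ) := by
      intro j
      have := myParseval u horth (h j) (h j)
      rw [horthh j j, if_pos rfl] at this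
      rw [← this]
      exact Finset.sum_congr rfl fun i _ => sq _
    rw [Finset.sum_congr rfl fun j _ => this j]
    simp
  calc ∑ i : Fin k, μ (Fin.castLE hkn i) ≤ ∑ i, μ i * t i :=
        myRearr hkn μ hmono t ht0 ht1 htsum
    _ = ∑ j, ∑ i, μ i * (u i ⬝ᵥ h j)^2 := by
        rw [Finset.sum_comm]
        exact Finset.sum_congr rfl fun i _ => by rw [ht, Finset.mul_sum]
    _ = ∑ j, h j ⬝ᵥ (Lsym *ᵥ h j) := by
        exact Finset.sum_congr rfl fun j _ =>
          (myQuadForm Lsym hLs μ u horth heig (h j)).symm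
    _ = ∑ j : Fin k, (∑ i ∈ A j, ∑ l ∈ (A j)ᶜ, W i l) / (∑ i ∈ A j, d i) :=
        Finset.sum_congr rfl fun j _ => hQ j
end

section
/- (Spectral lower bound for RatioCut) For every partition A₁,…,A_k of {1,…,n} into nonempty sets, RatioCut(A₁,…,A_k) ≥ μ₁ + μ₂ + … + μ_k, where μ₁ ≤ … ≤ μ_n are the eigenvalues of the unnormalized graph Laplacian L = D − W listed with multiplicity. -/
open Matrix BigOperators Finset


lemma ortho_dot {n : ℕ} (u : Fin n → (Fin n → ℝ))
    (horth : ∀ i j, u i ⬝ᵥ u j = if i = j then (1 : ℝ) else 0)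
    (a b : Fin n → ℝ) :
    (∑ i, a i • u i) ⬝ᵥ (∑ i, b i • u i) = ∑ i, a i * b i := by
  have expand : (∑ i, a i • u i) ⬝ᵥ (∑ i, b i • u i)
      = ∑ i, ∑ j, (a j * b i) * (u j ⬝ᵥ u i) := by
    simp only [dotProduct, Finset.sum_apply, Pi.smul_apply, smul_eq_mul,
      Finset.mul_sum, Finset.sum_mul]
    rw [Finset.sum_comm]
    refine Finset.sum_congr rfl fun i _ => ?_
    rw [Finset.sum_comm]
    refine Finset.sum_congr rfl fun j _ => ?_
    refine Finset.sum_congr rfl fun l _ => ?_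
    ring
  rw [expand]
  refine Finset.sum_congr rfl fun i _ => ?_
  simp only [horth, mul_ite, mul_one, mul_zero]
  simp

lemma ortho_expand {n : ℕ} (u : Fin n → (Fin n → ℝ))
    (horth : ∀ i j, u i ⬝ᵥ u j = if i = j then (1 : ℝ) else 0)
    (h : Fin n → ℝ) :
    ∑ i, (u i ⬝ᵥ h) • u i = h := by
  set U : Matrix (Fin n) (Fin n) ℝ := Matrix.of u with hU
  have hUUT : U * Uᵀ = 1 := by
    ext i j
    simp [Matrix.mul_apply, hU, Matrix.one_apply]
    have := horth i j
    simpa [dotProduct] using this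
  have hUTU : Uᵀ * U = 1 := mul_eq_one_comm.mp hUUT
  funext l
  have key : (Uᵀ *ᵥ (U *ᵥ h)) l = h l := by
    rw [Matrix.mulVec_mulVec, hUTU, Matrix.one_mulVec]
  rw [← key]
  simp only [Matrix.mulVec, dotProduct, Matrix.transpose_apply, hU,
    Matrix.of_apply, Finset.sum_apply, Pi.smul_apply, smul_eq_mul]
  refine Finset.sum_congr rfl fun i _ => ?_
  ring

-- Bessel inequality for an orthonormal family h
lemma bessel {n k : ℕ} (h : Fin k → (Fin n → ℝ))
    (hon : ∀ j j', h j ⬝ᵥ h j' = if j = j' then (1 : ℝ) else 0)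
    (v : Fin n → ℝ) (hv : v ⬝ᵥ v = 1) :
    ∑ j, (v ⬝ᵥ h j) ^ 2 ≤ 1 := by
  set c : Fin k → ℝ := fun j => v ⬝ᵥ h j with hc
  set s : Fin n → ℝ := ∑ j, c j • h j with hsdef
  set r : Fin n → ℝ := v - s with hr
  have h1 : (0:ℝ) ≤ r ⬝ᵥ r := by
    unfold dotProduct
    exact Finset.sum_nonneg fun i _ => mul_self_nonneg _
  have hs : ∀ w : Fin n → ℝ, s ⬝ᵥ w = ∑ j, c j * (h j ⬝ᵥ w) := by
    intro w
    rw [hsdef]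
    unfold dotProduct
    simp only [Finset.sum_apply, Pi.smul_apply, smul_eq_mul, Finset.sum_mul]
    rw [Finset.sum_comm]
    refine Finset.sum_congr rfl fun j _ => ?_
    rw [Finset.mul_sum]
    refine Finset.sum_congr rfl fun i _ => ?_
    ring
  have hs' : ∀ w : Fin n → ℝ, w ⬝ᵥ s = ∑ j, c j * (w ⬝ᵥ h j) := by
    intro w
    rw [dotProduct_comm, hs w]
    refine Finset.sum_congr rfl fun j _ => ?_
    rw [dotProduct_comm]
  have esv : s ⬝ᵥ v = ∑ j, c j ^ 2 := by
    rw [hs v]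
    refine Finset.sum_congr rfl fun j _ => ?_
    rw [dotProduct_comm]; rw [hc]; ring
  have evs : v ⬝ᵥ s = ∑ j, c j ^ 2 := by
    rw [hs' v]
    refine Finset.sum_congr rfl fun j _ => ?_
    rw [hc]; ring
  have ess : s ⬝ᵥ s = ∑ j, c j ^ 2 := by
    rw [hs s]
    have : ∀ j, h j ⬝ᵥ s = c j := by
      intro j
      rw [hs' (h j)]
      simp only [hon, mul_ite, mul_one, mul_zero]
      simp
    rw [Finset.sum_congr rfl fun j _ => by rw [this j]]
    refine Finset.sum_congr rfl fun j _ => by ring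
  have h2 : r ⬝ᵥ r = 1 - ∑ j, c j ^ 2 := by
    rw [hr, sub_dotProduct, dotProduct_sub, dotProduct_sub,
      hv, esv, evs, ess]
    ring
  rw [h2] at h1
  linarith

-- Majorization step
lemma major {n k : ℕ} (hkn : k ≤ n) (μ : Fin n → ℝ) (hmono : Monotone μ)
    (t : Fin n → ℝ) (ht0 : ∀ i, 0 ≤ t i) (ht1 : ∀ i, t i ≤ 1)
    (hts : ∑ i, t i = (k : ℝ)) :
    ∑ i : Fin k, μ (Fin.castLE hkn i) ≤ ∑ i, μ i * t i := by
  rcases Nat.eq_zero_or_pos k with hk | hk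
  · subst hk
    have hz : ∀ i ∈ Finset.univ, t i = 0 := by
      rw [← Finset.sum_eq_zero_iff_of_nonneg (fun i _ => ht0 i)]
      simpa using hts
    simp only [Finset.univ_eq_empty, Finset.sum_empty]
    rw [Finset.sum_congr rfl (fun i hi => by rw [hz i hi, mul_zero])]
    simp
  · set S : Finset (Fin n) := Finset.univ.map (Fin.castLEEmb hkn) with hS
    have hkn' : k - 1 < n := by omega
    set cc : ℝ := μ ⟨k - 1, hkn'⟩ with hcc
    have hmemS : ∀ i : Fin n, i ∈ S ↔ (i : ℕ) < k := by
      intro i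
      rw [hS]
      simp only [Finset.mem_map, Finset.mem_univ, true_and, Fin.castLEEmb_apply]
      constructor
      · rintro ⟨a, rfl⟩; simpa using a.isLt
      · intro hi; exact ⟨⟨(i:ℕ), hi⟩, by ext; simp⟩
    have hLHS : ∑ i : Fin k, μ (Fin.castLE hkn i) = ∑ i ∈ S, μ i := by
      rw [hS, Finset.sum_map]
      rfl
    have hcard : (S.card : ℝ) = (k : ℝ) := by
      rw [hS]; simp
    rw [hLHS]
    have hsplit : ∑ i : Fin n, μ i * t i = ∑ i ∈ S, μ i * t i + ∑ i ∈ Sᶜ, μ i * t i := by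
      rw [Finset.sum_add_sum_compl]
    have hsplit2 : ∑ i ∈ S, t i + ∑ i ∈ Sᶜ, t i = (k:ℝ) := by
      rw [Finset.sum_add_sum_compl]; exact hts
    have hSle : ∀ i ∈ S, μ i ≤ cc := by
      intro i hi
      apply hmono
      have : (i : ℕ) < k := (hmemS i).mp hi
      simp [Fin.le_def]; omega
    have hScle : ∀ i ∈ Sᶜ, cc ≤ μ i := by
      intro i hi
      apply hmono
      have : ¬ (i : ℕ) < k := by
        rw [Finset.mem_compl, hmemS i] at hi; exact hi
      simp [Fin.le_def]; omega
    have s1 : ∑ i ∈ S, cc * (t i - 1) ≤ ∑ i ∈ S, μ i * (t i - 1) := by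
      refine Finset.sum_le_sum fun i hi => ?_
      nlinarith [hSle i hi, ht1 i]
    have s2 : ∑ i ∈ Sᶜ, cc * t i ≤ ∑ i ∈ Sᶜ, μ i * t i := by
      refine Finset.sum_le_sum fun i hi => ?_
      nlinarith [hScle i hi, ht0 i]
    have exp1 : ∑ i ∈ S, μ i * (t i - 1) = ∑ i ∈ S, μ i * t i - ∑ i ∈ S, μ i := by
      rw [← Finset.sum_sub_distrib]
      exact Finset.sum_congr rfl fun i _ => by ring
    have exp2 : ∑ i ∈ S, cc * (t i - 1) = cc * ∑ i ∈ S, t i - (S.card : ℝ) * cc := by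
      simp only [mul_sub, mul_one, Finset.sum_sub_distrib, Finset.sum_const,
        nsmul_eq_mul, Finset.mul_sum]
    have exp3 : ∑ i ∈ Sᶜ, cc * t i = cc * ∑ i ∈ Sᶜ, t i := by
      rw [Finset.mul_sum]
    rw [exp1, exp2] at s1
    rw [exp3] at s2
    have hzero : (cc * ∑ i ∈ S, t i - (S.card : ℝ) * cc) + cc * ∑ i ∈ Sᶜ, t i = 0 := by
      have : (cc * ∑ i ∈ S, t i - (S.card : ℝ) * cc) + cc * ∑ i ∈ Sᶜ, t i
          = cc * ((∑ i ∈ S, t i + ∑ i ∈ Sᶜ, t i) - (S.card : ℝ)) := by ring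
      rw [this, hsplit2, hcard]
      ring
    linarith [s1, s2, hsplit, hzero]

lemma indicator_dot {n : ℕ} (B C : Finset (Fin n)) (x y : ℝ) :
    (fun i => if i ∈ B then x else 0) ⬝ᵥ (fun i => if i ∈ C then y else 0)
      = ((B ∩ C).card : ℝ) * (x * y) := by
  unfold dotProduct
  have : ∀ i : Fin n, (if i ∈ B then x else 0) * (if i ∈ C then y else 0)
      = if i ∈ B ∩ C then x * y else 0 := by
    intro i
    by_cases hB : i ∈ B <;> by_cases hC : i ∈ C <;> simp [hB, hC, Finset.mem_inter]
  rw [Finset.sum_congr rfl fun i _ => this i]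
  rw [Finset.sum_ite_mem, Finset.univ_inter, Finset.sum_const, nsmul_eq_mul]


/-- **Spectral lower bound for RatioCut.**
For every partition `A 0, …, A (k-1)` of `{1,…,n}` into nonempty sets,
`RatioCut (A 0, …, A (k-1)) = ∑ j, cut (A j) / |A j| ≥ μ 0 + ⋯ + μ (k-1)`, where
`μ 0 ≤ … ≤ μ (n-1)` are the eigenvalues of the unnormalized graph Laplacian `L = D - W`
listed with multiplicity (witnessed by an orthonormal eigenbasis `u`). -/
theorem ratiocut_spectral_lower_bound
    (n k : ℕ) (hkn : k ≤ n) (W : Matrix (Fin n) (Fin n) ℝ)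
    (hWsymm : W.IsSymm) (hWnn : ∀ i j, 0 ≤ W i j)
    (d : Fin n → ℝ) (hd : ∀ i, d i = ∑ j, W i j)
    (L : Matrix (Fin n) (Fin n) ℝ) (hLdef : L = Matrix.diagonal d - W)
    (μ : Fin n → ℝ) (hmono : Monotone μ)
    (u : Fin n → (Fin n → ℝ))
    (horth : ∀ i j, u i ⬝ᵥ u j = if i = j then (1 : ℝ) else 0)
    (heig : ∀ i, L *ᵥ u i = μ i • u i)
    (A : Fin k → Finset (Fin n))
    (hne : ∀ j, (A j).Nonempty)
    (hdisj : ∀ j j', j ≠ j' → Disjoint (A j) (A j'))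
    (hcover : ∀ i : Fin n, ∃ j, i ∈ A j) :
    ∑ i : Fin k, μ (Fin.castLE hkn i) ≤
      ∑ j : Fin k, (∑ i ∈ A j, ∑ l ∈ (A j)ᶜ, W i l) / ((A j).card : ℝ) := by
  -- setup: normalized indicator vectors
  set s : Fin k → ℝ := fun j => Real.sqrt ((A j).card) with hsdef
  have hcardpos : ∀ j, (0:ℝ) < ((A j).card : ℝ) := by
    intro j
    exact_mod_cast Finset.card_pos.mpr (hne j)
  have hspos : ∀ j, 0 < s j := fun j => Real.sqrt_pos.mpr (hcardpos j)
  have hssq : ∀ j, s j * s j = ((A j).card : ℝ) :=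
    fun j => Real.mul_self_sqrt (le_of_lt (hcardpos j))
  set h : Fin k → (Fin n → ℝ) :=
    fun j i => if i ∈ A j then (s j)⁻¹ else 0 with hhdef
  -- h is orthonormal
  have hon : ∀ j j', h j ⬝ᵥ h j' = if j = j' then (1 : ℝ) else 0 := by
    intro j j'
    rw [hhdef]
    rw [indicator_dot]
    by_cases hjj : j = j'
    · subst hjj
      simp only [Finset.inter_self, if_pos rfl]
      rw [← hssq j]
      field_simp
      simp [(hspos j).ne']
    · rw [if_neg hjj]
      rw [Finset.disjoint_iff_inter_eq_empty.mp (hdisj j j' hjj)]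
      simp
  -- the Rayleigh quotient of h j equals the j-th ratio-cut term
  have hray : ∀ j, h j ⬝ᵥ (L *ᵥ h j)
      = (∑ i ∈ A j, ∑ l ∈ (A j)ᶜ, W i l) / ((A j).card : ℝ) := by
    intro j
    have helper : ∀ f : Fin n → ℝ, ∑ i, h j i * f i = (s j)⁻¹ * ∑ i ∈ A j, f i := by
      intro f
      rw [hhdef]
      simp only [ite_mul, zero_mul]
      rw [← Finset.sum_filter, Finset.filter_mem_eq_inter, Finset.univ_inter,
        Finset.mul_sum]
    have expand : h j ⬝ᵥ (L *ᵥ h j)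
        = ((s j)⁻¹ * (s j)⁻¹) * ∑ i ∈ A j, ∑ l ∈ A j, L i l := by
      have step1 : h j ⬝ᵥ (L *ᵥ h j) = (s j)⁻¹ * ∑ i ∈ A j, (L *ᵥ h j) i := by
        unfold dotProduct
        exact helper (fun i => (L *ᵥ h j) i)
      have step2 : ∀ i, (L *ᵥ h j) i = (s j)⁻¹ * ∑ l ∈ A j, L i l := by
        intro i
        have : (L *ᵥ h j) i = ∑ l, h j l * L i l := by
          unfold Matrix.mulVec dotProduct
          exact Finset.sum_congr rfl fun l _ => by ring
        rw [this, helper (fun l => L i l)]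
      rw [step1, Finset.sum_congr rfl fun i _ => step2 i, Finset.mul_sum,
        Finset.mul_sum]
      refine Finset.sum_congr rfl fun i _ => ?_
      simp only [Finset.mul_sum]
      exact Finset.sum_congr rfl fun l _ => by ring
    have inner : ∑ i ∈ A j, ∑ l ∈ A j, L i l = ∑ i ∈ A j, ∑ l ∈ (A j)ᶜ, W i l := by
      rw [hLdef]
      refine Finset.sum_congr rfl fun i hi => ?_
      simp only [Matrix.sub_apply]
      rw [Finset.sum_sub_distrib]
      have hdiag : ∑ l ∈ A j, Matrix.diagonal d i l = d i := by
        have : ∀ l ∈ A j, Matrix.diagonal d i l = if l = i then d i else 0 := by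
          intro l _
          by_cases hli : l = i
          · subst hli; simp [Matrix.diagonal_apply_eq]
          · rw [Matrix.diagonal_apply_ne' d hli, if_neg hli]
        rw [Finset.sum_congr rfl this, Finset.sum_ite_eq' (A j) i (fun _ => d i),
          if_pos hi]
      rw [hdiag, hd i]
      have : ∑ l : Fin n, W i l = ∑ l ∈ A j, W i l + ∑ l ∈ (A j)ᶜ, W i l :=
        (Finset.sum_add_sum_compl (A j) _).symm
      rw [this]
      ring
    rw [expand, inner]
    rw [div_eq_mul_inv, mul_comm, ← hssq j]
    field_simp
  -- coefficients in the eigenbasis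
  set c : Fin k → Fin n → ℝ := fun j i => u i ⬝ᵥ h j with hcdef
  have hexp : ∀ j, ∑ i, c j i • u i = h j := fun j => ortho_expand u horth (h j)
  have hnorm : ∀ j, ∑ i, (c j i)^2 = 1 := by
    intro j
    have := ortho_dot u horth (c j) (c j)
    rw [hexp j, hon j j, if_pos rfl] at this
    rw [this]
    exact Finset.sum_congr rfl fun i _ => by ring
  have hval : ∀ j, h j ⬝ᵥ (L *ᵥ h j) = ∑ i, μ i * (c j i)^2 := by
    intro j
    have hLh : L *ᵥ h j = ∑ i, (c j i * μ i) • u i := by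
      rw [← hexp j]
      rw [← Matrix.mulVecLin_apply, map_sum]
      refine Finset.sum_congr rfl fun i _ => ?_
      rw [LinearMap.map_smul, Matrix.mulVecLin_apply, heig i, smul_smul]
    rw [hLh]
    conv_lhs => rw [← hexp j]
    rw [ortho_dot u horth (c j) (fun i => c j i * μ i)]
    exact Finset.sum_congr rfl fun i _ => by ring
  -- weights t
  set t : Fin n → ℝ := fun i => ∑ j, (c j i)^2 with htdef
  have ht0 : ∀ i, 0 ≤ t i :=
    fun i => Finset.sum_nonneg fun j _ => sq_nonneg _
  have ht1 : ∀ i, t i ≤ 1 := by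
    intro i
    apply bessel h hon (u i)
    rw [horth i i, if_pos rfl]
  have hts : ∑ i, t i = (k : ℝ) := by
    rw [htdef]
    simp only
    rw [Finset.sum_comm]
    rw [Finset.sum_congr rfl fun j _ => hnorm j]
    simp
  -- put it together
  calc ∑ i : Fin k, μ (Fin.castLE hkn i)
      ≤ ∑ i, μ i * t i := major hkn μ hmono t ht0 ht1 hts
    _ = ∑ j : Fin k, (∑ i ∈ A j, ∑ l ∈ (A j)ᶜ, W i l) / ((A j).card : ℝ) := by
        rw [Finset.sum_congr rfl fun i (_ : i ∈ Finset.univ) =>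
          (by rw [htdef]; simp only; rw [Finset.mul_sum] :
            μ i * t i = ∑ j, μ i * (c j i)^2)]
        rw [Finset.sum_comm]
        exact Finset.sum_congr rfl fun j _ => by rw [← hval j, hray j]
end
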